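/- Let P ∈ ℝ^{5×5} be symmetric positive definite, S ∈ ℝ^{5×5} symmetric positive semidefinite, N ∈ ℝ^{2×2} symmetric positive definite, M an arbitrary 2×2 matrix and θ̂ ∈ ℝ. Set H = M · R(θ̂)ᵀ · [0₂ₓ₁ | −I₂ | I₂] ∈ ℝ^{2×5}, P' = P + S (propagation step), and P⁺ = P' − P' Hᵀ (H P' Hᵀ + N)⁻¹ H P' (Kalman update step). Then P' and P⁺ are symmetric positive definite, and for every vector δ ∈ ℝ⁵ that is a linear combination of (1,0,0,0,0), (0,1,0,1,0) and (0,0,1,0,1), one has δᵀ (P⁺)⁻¹ δ ≤ δᵀ P⁻¹ δ: the Fisher information of the IEKF along the unobservable rotation and translation shifts never increases over one propagation–update cycle. -/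

import Mathlib

open Matrix Real

set_option maxRecDepth 8000
set_option maxHeartbeats 1000000

/-- The 2×2 rotation matrix of angle `θ`. -/
noncomputable def Rmat (θ : ℝ) : Matrix (Fin 2) (Fin 2) ℝ :=
  !![Real.cos θ, -Real.sin θ; Real.sin θ, Real.cos θ]

/-- The matrix `J = [[0,-1],[1,0]]`. -/
def Jmat : Matrix (Fin 2) (Fin 2) ℝ := !![0, -1; 1, 0]


/-- The 2×5 block matrix `[0₂ₓ₁ | −I₂ | I₂]`. -/
def Bmat0 : Matrix (Fin 2) (Fin 5) ℝ := !![0, -1, 0, 1, 0; 0, 0, -1, 0, 1]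

/-- Unobservable rotation shift `(1, 0, 0)`. -/
def dR : Fin 5 → ℝ := ![1, 0, 0, 0, 0]

/-- Unobservable translation shift `(0, e₁, e₁)`. -/
def d1 : Fin 5 → ℝ := ![0, 1, 0, 1, 0]

/-- Unobservable translation shift `(0, e₂, e₂)`. -/
def d2 : Fin 5 → ℝ := ![0, 0, 1, 0, 1]

/-- The Kalman covariance update `P' ↦ P' − P'Hᵀ(HP'Hᵀ + N)⁻¹HP'`. -/
noncomputable def kalmanUpdate (P' : Matrix (Fin 5) (Fin 5) ℝ)
    (H : Matrix (Fin 2) (Fin 5) ℝ) (N : Matrix (Fin 2) (Fin 2) ℝ) :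
    Matrix (Fin 5) (Fin 5) ℝ :=
  P' - P' * Hᵀ * (H * P' * Hᵀ + N)⁻¹ * H * P'

-- symmetric dot swap
lemma symm_dot {n : ℕ} {A : Matrix (Fin n) (Fin n) ℝ} (h : Aᵀ = A) (u v : Fin n → ℝ) :
    u ⬝ᵥ A *ᵥ v = v ⬝ᵥ A *ᵥ u := by
  rw [dotProduct_mulVec, ← mulVec_transpose, h, dotProduct_comm]

lemma herm_eq {n : ℕ} {A : Matrix (Fin n) (Fin n) ℝ} (h : A.IsHermitian) : Aᵀ = A := by
  rw [← conjTranspose_eq_transpose_of_trivial]; exact h.eq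

-- monotonicity of inverse quadratic form
lemma quad_inv_le {n : ℕ} {A B : Matrix (Fin n) (Fin n) ℝ} (hA : A.PosDef) (hB : B.PosDef)
    (hAB : (B - A).PosSemidef) (δ : Fin n → ℝ) :
    δ ⬝ᵥ B⁻¹ *ᵥ δ ≤ δ ⬝ᵥ A⁻¹ *ᵥ δ := by
  set y := B⁻¹ *ᵥ δ with hydef
  set w := A⁻¹ *ᵥ δ with hwdef
  have hy : B *ᵥ y = δ := by
    rw [hydef, mulVec_mulVec, mul_nonsing_inv _ hB.det_pos.ne'.isUnit, one_mulVec]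
  have hw : A *ᵥ w = δ := by
    rw [hwdef, mulVec_mulVec, mul_nonsing_inv _ hA.det_pos.ne'.isUnit, one_mulVec]
  have hsymA : Aᵀ = A := herm_eq hA.isHermitian
  have h1 : 0 ≤ (y - w) ⬝ᵥ A *ᵥ (y - w) := by simpa using hA.posSemidef.dotProduct_mulVec_nonneg (y - w)
  have h2 : 0 ≤ y ⬝ᵥ (B - A) *ᵥ y := by simpa using hAB.dotProduct_mulVec_nonneg y
  have e1 : (y - w) ⬝ᵥ A *ᵥ (y - w)
      = y ⬝ᵥ A *ᵥ y - 2 * (y ⬝ᵥ δ) + δ ⬝ᵥ w := by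
    have s1 : w ⬝ᵥ A *ᵥ y = y ⬝ᵥ A *ᵥ w := symm_dot hsymA w y
    simp only [mulVec_sub, dotProduct_sub, sub_dotProduct, s1, hw]
    have : w ⬝ᵥ δ = δ ⬝ᵥ w := dotProduct_comm _ _
    rw [this]; ring
  have e2 : y ⬝ᵥ (B - A) *ᵥ y = y ⬝ᵥ δ - y ⬝ᵥ A *ᵥ y := by
    simp only [sub_mulVec, dotProduct_sub, hy]
  have e3 : δ ⬝ᵥ y = y ⬝ᵥ δ := dotProduct_comm _ _
  rw [← hydef, ← hwdef] at *
  linarith [h1, h2, e1.symm.le]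


/-- One propagation–update cycle of the IEKF-SLAM (propagation `P' = P + S`,
update with `H = M R(θ̂)ᵀ [0 | −I₂ | I₂]` and measurement noise `N`) keeps the covariance
positive definite and never increases the information `δᵀ P⁻¹ δ` along any linear combination
`δ` of the unobservable shifts `(1,0,0,0,0)`, `(0,1,0,1,0)`, `(0,0,1,0,1)`. -/
theorem statement6 (P S : Matrix (Fin 5) (Fin 5) ℝ) (N M : Matrix (Fin 2) (Fin 2) ℝ) (θ : ℝ)
    (hP : P.PosDef) (hS : S.PosSemidef) (hN : N.PosDef) :
    (P + S).PosDef ∧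
    (kalmanUpdate (P + S) (M * (Rmat θ)ᵀ * Bmat0) N).PosDef ∧
    ∀ a b c : ℝ,
      (a • dR + b • d1 + c • d2) ⬝ᵥ
          (kalmanUpdate (P + S) (M * (Rmat θ)ᵀ * Bmat0) N)⁻¹.mulVec
            (a • dR + b • d1 + c • d2) ≤
        (a • dR + b • d1 + c • d2) ⬝ᵥ P⁻¹.mulVec (a • dR + b • d1 + c • d2) := by
  set H : Matrix (Fin 2) (Fin 5) ℝ := M * (Rmat θ)ᵀ * Bmat0 with hHdef
  set P' : Matrix (Fin 5) (Fin 5) ℝ := P + S with hP'def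
  have hP' : P'.PosDef := hP.add_posSemidef hS
  have hHc : Hᴴ = Hᵀ := conjTranspose_eq_transpose_of_trivial H
  have hHPH : (H * P' * Hᵀ).PosSemidef := by
    have := hP'.posSemidef.mul_mul_conjTranspose_same H
    rwa [hHc] at this
  have hW : (H * P' * Hᵀ + N).PosDef := Matrix.PosDef.posSemidef_add hHPH hN
  set K : Matrix (Fin 2) (Fin 2) ℝ := (H * P' * Hᵀ + N)⁻¹ with hKdef
  have hKW : K * (H * P' * Hᵀ + N) = 1 := nonsing_inv_mul _ hW.det_pos.ne'.isUnit
  have hHN : (Hᵀ * N⁻¹ * H).PosSemidef := by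
    have := hN.inv.posSemidef.mul_mul_conjTranspose_same Hᵀ
    rwa [conjTranspose_eq_transpose_of_trivial, transpose_transpose] at this
  set A : Matrix (Fin 5) (Fin 5) ℝ := P'⁻¹ + Hᵀ * N⁻¹ * H with hAdef
  have hA : A.PosDef := hP'.inv.add_posSemidef hHN
  have hPP : P' * P'⁻¹ = 1 := mul_nonsing_inv _ hP'.det_pos.ne'.isUnit
  have hNN : N * N⁻¹ = 1 := mul_nonsing_inv _ hN.det_pos.ne'.isUnit
  have hKs : K * (H * P' * Hᵀ) = 1 - K * N := by
    rw [mul_add] at hKW; exact eq_sub_of_add_eq hKW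
  have hProd : kalmanUpdate P' H N * A = 1 := by
    unfold kalmanUpdate
    rw [hAdef, ← hKdef]
    have t3 : P' * Hᵀ * K * H * P' * P'⁻¹ = P' * Hᵀ * K * H := by
      rw [mul_assoc (P' * Hᵀ * K * H) P' P'⁻¹, hPP, mul_one]
    have t4 : P' * Hᵀ * K * H * P' * (Hᵀ * N⁻¹ * H)
        = P' * (Hᵀ * N⁻¹ * H) - P' * Hᵀ * K * H := by
      calc P' * Hᵀ * K * H * P' * (Hᵀ * N⁻¹ * H)
          = P' * Hᵀ * (K * (H * P' * Hᵀ)) * (N⁻¹ * H) := by simp only [Matrix.mul_assoc]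
        _ = P' * Hᵀ * (1 - K * N) * (N⁻¹ * H) := by rw [hKs]
        _ = P' * (Hᵀ * N⁻¹ * H) - P' * Hᵀ * (K * (N * N⁻¹)) * H := by
              simp only [Matrix.mul_sub, Matrix.sub_mul, mul_one, Matrix.one_mul, Matrix.mul_assoc]
        _ = P' * (Hᵀ * N⁻¹ * H) - P' * Hᵀ * K * H := by
              rw [hNN]; simp only [mul_one, Matrix.mul_assoc]
    rw [Matrix.sub_mul, Matrix.mul_add, Matrix.mul_add, hPP, t3, t4]
    abel
  have hKUinv : A⁻¹ = kalmanUpdate P' H N := inv_eq_left_inv hProd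
  have hKUpd : (kalmanUpdate P' H N).PosDef := hKUinv ▸ hA.inv
  refine ⟨hP', hKUpd, ?_⟩
  intro a b c
  set δ : Fin 5 → ℝ := a • dR + b • d1 + c • d2 with hδdef
  have hKUinv2 : (kalmanUpdate P' H N)⁻¹ = A := by
    rw [← hKUinv, nonsing_inv_nonsing_inv _ hA.det_pos.ne'.isUnit]
  have hBδ : Bmat0 *ᵥ δ = 0 := by
    funext i
    fin_cases i <;>
      simp [hδdef, Bmat0, dR, d1, d2, mulVec, dotProduct, Fin.sum_univ_five]
  have hHNδ : (Hᵀ * N⁻¹ * H) *ᵥ δ = 0 := by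
    rw [hHdef]
    have : Hᵀ * N⁻¹ * (M * (Rmat θ)ᵀ * Bmat0) = (Hᵀ * N⁻¹ * (M * (Rmat θ)ᵀ)) * Bmat0 := by
      simp only [Matrix.mul_assoc]
    rw [hHdef] at this
    rw [this, ← mulVec_mulVec, hBδ, mulVec_zero]
  have hAδ : A *ᵥ δ = P'⁻¹ *ᵥ δ := by
    rw [hAdef, add_mulVec, hHNδ, add_zero]
  rw [hKUinv2]
  show δ ⬝ᵥ A *ᵥ δ ≤ δ ⬝ᵥ P⁻¹ *ᵥ δ
  rw [hAδ]
  have hsub : (P' - P).PosSemidef := by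
    rw [hP'def]; simpa using hS
  exact quad_inv_le hP hP' hsub δ
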